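/- For α with 1 < α < 2, the limit h(x) := lim_{q→0+} (u_q(0) − u_q(x)) exists for every x ∈ ℝ and equals (1/π) ∫₀^∞ (1 − cos(xλ))/λ^α dλ, where u_q(x) = (1/π) ∫₀^∞ cos(xλ)/(q + λ^α) dλ. -/

import Mathlib

open MeasureTheory Filter

lemma meas_aux (α c q : ℝ) :
    AEStronglyMeasurable (fun l : ℝ => (1 - Real.cos (c * l)) / (q + l ^ α))
      (volume.restrict (Set.Ioi (0:ℝ))) := by
  apply Measurable.aestronglyMeasurable
  exact (measurable_const.sub ((Real.continuous_cos.comp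
    (continuous_const.mul continuous_id)).measurable)).div
    (measurable_const.add (measurable_id.pow_const α))

lemma h_integrable (α : ℝ) (hα : 1 < α) (hα2 : α < 2) (x : ℝ) :
    IntegrableOn (fun l : ℝ => (1 - Real.cos (x * l)) / l ^ α) (Set.Ioi 0) := by
  have hsplit : Set.Ioc (0:ℝ) 1 ∪ Set.Ioi (1:ℝ) = Set.Ioi 0 :=
    Set.Ioc_union_Ioi_eq_Ioi zero_le_one
  rw [← hsplit]
  apply IntegrableOn.union
  · -- near 0 : bound by (x^2/2) * l^(2-α)
    have hint : IntegrableOn (fun l : ℝ => x ^ 2 / 2 * l ^ (2 - α)) (Set.Ioc (0:ℝ) 1) := by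
      apply Integrable.const_mul
      have h1 := intervalIntegral.intervalIntegrable_rpow' (a := (0:ℝ)) (b := 1)
        (r := 2 - α) (by linarith)
      rwa [intervalIntegrable_iff_integrableOn_Ioc_of_le (zero_le_one' ℝ)] at h1
    have hm : AEStronglyMeasurable (fun l : ℝ => (1 - Real.cos (x * l)) / l ^ α)
        (volume.restrict (Set.Ioc (0:ℝ) 1)) :=
      ((measurable_const.sub ((Real.continuous_cos.comp
        (continuous_const.mul continuous_id)).measurable)).div
        (measurable_id.pow_const α)).aestronglyMeasurable
    apply Integrable.mono' hint hm ?_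
    · filter_upwards [ae_restrict_mem measurableSet_Ioc] with l hl
      have hl0 : (0:ℝ) < l := hl.1
      have hla : (0:ℝ) < l ^ α := Real.rpow_pos_of_pos hl0 α
      have hcos : 1 - Real.cos (x * l) ≤ (x * l) ^ 2 / 2 := by
        have := Real.one_sub_sq_div_two_le_cos (x := x * l)
        linarith
      have hnn : 0 ≤ 1 - Real.cos (x * l) := by
        have := Real.cos_le_one (x * l); linarith
      rw [Real.norm_eq_abs, abs_div, abs_of_nonneg hnn, abs_of_pos hla,
        div_le_iff₀ hla]
      have h2 : x ^ 2 / 2 * l ^ (2 - α) * l ^ α = x ^ 2 / 2 * l ^ 2 := by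
        rw [mul_assoc, ← Real.rpow_natCast l 2, ← Real.rpow_add hl0]
        norm_num
      rw [h2]
      calc 1 - Real.cos (x * l) ≤ (x * l) ^ 2 / 2 := hcos
        _ = x ^ 2 / 2 * l ^ 2 := by ring
  · -- at infinity: bound by 2 * l^(-α)
    have hint : IntegrableOn (fun l : ℝ => 2 * l ^ (-α)) (Set.Ioi (1:ℝ)) :=
      (integrableOn_Ioi_rpow_of_lt (by linarith) one_pos).const_mul 2
    have hm : AEStronglyMeasurable (fun l : ℝ => (1 - Real.cos (x * l)) / l ^ α)
        (volume.restrict (Set.Ioi (1:ℝ))) :=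
      ((measurable_const.sub ((Real.continuous_cos.comp
        (continuous_const.mul continuous_id)).measurable)).div
        (measurable_id.pow_const α)).aestronglyMeasurable
    apply Integrable.mono' hint hm ?_
    · filter_upwards [ae_restrict_mem measurableSet_Ioi] with l hl
      have hl0 : (0:ℝ) < l := lt_trans one_pos hl
      have hla : (0:ℝ) < l ^ α := Real.rpow_pos_of_pos hl0 α
      have hnn : 0 ≤ 1 - Real.cos (x * l) := by
        have := Real.cos_le_one (x * l); linarith
      have hb : 1 - Real.cos (x * l) ≤ 2 := by
        have := Real.neg_one_le_cos (x * l); linarith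
      rw [Real.norm_eq_abs, abs_div, abs_of_nonneg hnn, abs_of_pos hla,
        div_le_iff₀ hla, Real.rpow_neg hl0.le, mul_assoc,
        inv_mul_cancel₀ hla.ne', mul_one]
      exact hb

lemma resolvent_integrable (α : ℝ) (hα : 1 < α) {q : ℝ} (hq : 0 < q) (c : ℝ) :
    IntegrableOn (fun l : ℝ => Real.cos (c * l) / (q + l ^ α)) (Set.Ioi 0) := by
  have hmeas : AEStronglyMeasurable (fun l : ℝ => Real.cos (c * l) / (q + l ^ α))
      (volume.restrict (Set.Ioi (0:ℝ))) :=
    ((Real.continuous_cos.comp (continuous_const.mul continuous_id)).measurable.div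
      (measurable_const.add (measurable_id.pow_const α))).aestronglyMeasurable
  have hsplit : Set.Ioc (0:ℝ) 1 ∪ Set.Ioi (1:ℝ) = Set.Ioi 0 :=
    Set.Ioc_union_Ioi_eq_Ioi zero_le_one
  rw [← hsplit]
  apply IntegrableOn.union
  · -- bounded by 1/q on finite measure set
    have hint : IntegrableOn (fun _ : ℝ => q⁻¹) (Set.Ioc (0:ℝ) 1) :=
      integrableOn_const measure_Ioc_lt_top.ne
    apply Integrable.mono' hint (hmeas.mono_set (fun l hl => Set.mem_Ioi.2 hl.1))
    filter_upwards [ae_restrict_mem measurableSet_Ioc] with l hl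
    have hl0 : (0:ℝ) < l := hl.1
    have hla : (0:ℝ) ≤ l ^ α := (Real.rpow_pos_of_pos hl0 α).le
    have hden : (0:ℝ) < q + l ^ α := by linarith
    rw [Real.norm_eq_abs, abs_div, abs_of_pos hden]
    calc |Real.cos (c * l)| / (q + l ^ α) ≤ 1 / (q + l ^ α) := by
          gcongr; exact Real.abs_cos_le_one _
      _ ≤ 1 / q := by gcongr; linarith
      _ = q⁻¹ := one_div q
  · have hint : IntegrableOn (fun l : ℝ => l ^ (-α)) (Set.Ioi (1:ℝ)) :=
      integrableOn_Ioi_rpow_of_lt (by linarith) one_pos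
    apply Integrable.mono' hint (hmeas.mono_set
      (fun l hl => Set.mem_Ioi.2 (lt_trans one_pos hl)))
    filter_upwards [ae_restrict_mem measurableSet_Ioi] with l hl
    have hl0 : (0:ℝ) < l := lt_trans one_pos hl
    have hla : (0:ℝ) < l ^ α := Real.rpow_pos_of_pos hl0 α
    have hden : (0:ℝ) < q + l ^ α := by linarith
    rw [Real.norm_eq_abs, abs_div, abs_of_pos hden, Real.rpow_neg hl0.le]
    calc |Real.cos (c * l)| / (q + l ^ α) ≤ 1 / (q + l ^ α) := by
          gcongr; exact Real.abs_cos_le_one _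
      _ ≤ 1 / l ^ α := by gcongr; linarith
      _ = (l ^ α)⁻¹ := one_div _

/-- For `1 < α < 2`, the limit `h(x) = lim_{q→0+} (u_q(0) - u_q(x))` exists for every
`x ∈ ℝ` and equals `(1/π) ∫₀^∞ (1 - cos(xλ))/λ^α dλ`, where
`u_q(x) = (1/π) ∫₀^∞ cos(xλ)/(q+λ^α) dλ`. -/
theorem limit_resolvent_difference
    (α : ℝ) (hα : 1 < α) (hα2 : α < 2) (x : ℝ) :
    Tendsto (fun q : ℝ =>
        ((1 / Real.pi) * ∫ l in Set.Ioi (0 : ℝ), Real.cos (0 * l) / (q + l ^ α))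
          - (1 / Real.pi) * ∫ l in Set.Ioi (0 : ℝ), Real.cos (x * l) / (q + l ^ α))
      (nhdsWithin 0 (Set.Ioi 0))
      (nhds ((1 / Real.pi) * ∫ l in Set.Ioi (0 : ℝ), (1 - Real.cos (x * l)) / l ^ α)) := by
  have key : Tendsto (fun q : ℝ =>
      ∫ l in Set.Ioi (0 : ℝ), (1 - Real.cos (x * l)) / (q + l ^ α))
      (nhdsWithin 0 (Set.Ioi 0))
      (nhds (∫ l in Set.Ioi (0 : ℝ), (1 - Real.cos (x * l)) / l ^ α)) := by
    apply tendsto_integral_filter_of_dominated_convergence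
      (fun l => (1 - Real.cos (x * l)) / l ^ α)
    · exact Eventually.of_forall (fun q => meas_aux α x q)
    · filter_upwards [self_mem_nhdsWithin] with q hq
      filter_upwards [ae_restrict_mem measurableSet_Ioi] with l hl
      have hl0 : (0:ℝ) < l := hl
      have hla : (0:ℝ) < l ^ α := Real.rpow_pos_of_pos hl0 α
      have hqpos : (0:ℝ) < q := hq
      have hden : (0:ℝ) < q + l ^ α := by linarith
      have hnn : 0 ≤ 1 - Real.cos (x * l) := by
        have := Real.cos_le_one (x * l); linarith
      rw [Real.norm_eq_abs, abs_div, abs_of_nonneg hnn, abs_of_pos hden]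
      gcongr
      · linarith
    · exact h_integrable α hα hα2 x
    · filter_upwards [ae_restrict_mem measurableSet_Ioi] with l hl
      have hl0 : (0:ℝ) < l := hl
      have hla : (0:ℝ) < l ^ α := Real.rpow_pos_of_pos hl0 α
      have hden : Tendsto (fun q : ℝ => q + l ^ α) (nhdsWithin 0 (Set.Ioi 0))
          (nhds (l ^ α)) := by
        have : Tendsto (fun q : ℝ => q + l ^ α) (nhds 0) (nhds (0 + l ^ α)) :=
          (continuous_id.add continuous_const).tendsto 0
        rw [zero_add] at this
        exact this.mono_left nhdsWithin_le_nhds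
      exact tendsto_const_nhds.div hden hla.ne'
  have heq : (fun q : ℝ =>
      ((1 / Real.pi) * ∫ l in Set.Ioi (0 : ℝ), Real.cos (0 * l) / (q + l ^ α))
        - (1 / Real.pi) * ∫ l in Set.Ioi (0 : ℝ), Real.cos (x * l) / (q + l ^ α))
      =ᶠ[nhdsWithin (0:ℝ) (Set.Ioi 0)] (fun q : ℝ =>
      (1 / Real.pi) * ∫ l in Set.Ioi (0 : ℝ), (1 - Real.cos (x * l)) / (q + l ^ α)) := by
    filter_upwards [self_mem_nhdsWithin] with q hq
    have hq0 : (0:ℝ) < q := hq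
    rw [← mul_sub, ← integral_sub (resolvent_integrable α hα hq0 0)
      (resolvent_integrable α hα hq0 x)]
    congr 1
    apply setIntegral_congr_fun measurableSet_Ioi
    intro l _
    simp [sub_div]
  exact Tendsto.congr' heq.symm (key.const_mul (1 / Real.pi))
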